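/- For every E0 > 0, γ > 0 and μ > 0, the transition system (A)–(B) has at most two solutions (q, ν) with ν > 0 and 0 ≤ q < 1. -/

import Mathlib

open Filter

/-- The unique positive root of `ε² + (E0+4)ε - γ² = 0`. -/
noncomputable def epsPar (E0 γ : ℝ) : ℝ :=
  (-(E0 + 4) + Real.sqrt ((E0 + 4)^2 + 4 * γ^2)) / 2

/-- `E1 = E0 + ε`. -/
noncomputable def E1Par (E0 γ : ℝ) : ℝ := E0 + epsPar E0 γ

/-- `a = 4 + E0 + ε`. -/
noncomputable def aPar (E0 γ : ℝ) : ℝ := 4 + E0 + epsPar E0 γ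

/-- Equation (A) of the transition system:
`(1-q)(1+q) = 12γ⁴ / (ν² (ν+E1) (ν+a+ε)²)`. -/
def EqA (E0 γ q ν : ℝ) : Prop :=
  (1 - q) * (1 + q) =
    12 * γ^4 / (ν^2 * (ν + E1Par E0 γ) * (ν + aPar E0 γ + epsPar E0 γ)^2)

/-- Equation (B) of the transition system:
`(2+q)²/(1+q) = (9/2)(μ/γ²)(ν+a)²(ν+E1)/(ν(ν+a+ε))`. -/
def EqB (E0 γ μ q ν : ℝ) : Prop :=
  (2 + q)^2 / (1 + q) =
    (9/2) * (μ / γ^2) * ((ν + aPar E0 γ)^2 * (ν + E1Par E0 γ)) /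
      (ν * (ν + aPar E0 γ + epsPar E0 γ))

open Set
set_option maxHeartbeats 1000000



noncomputable def lfun (u : ℝ) : ℝ :=
  (2 + Real.sqrt (1 - u))^2 / (1 + Real.sqrt (1 - u))

lemma lfun_hasDerivAt {u : ℝ} (hu : u ∈ Set.Ioo (0:ℝ) 1) :
    HasDerivAt lfun
      (-(2 + Real.sqrt (1-u)) / (2*(1 + Real.sqrt (1-u))^2)) u := by
  obtain ⟨h0, h1⟩ := hu
  have h1u : (1:ℝ) - u ≠ 0 := by linarith
  have hq0 : 0 < Real.sqrt (1-u) := Real.sqrt_pos.mpr (by linarith)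
  set q := Real.sqrt (1-u) with hqdef
  have hs : HasDerivAt (fun u : ℝ => Real.sqrt (1-u)) ((-1) / (2*q)) u := by
    have hbase : HasDerivAt (fun u : ℝ => 1 - u) (-1) u := by
      simpa using (hasDerivAt_id u).const_sub 1
    exact hbase.sqrt h1u
  have hnum : HasDerivAt (fun u : ℝ => (2 + Real.sqrt (1-u))^2)
      (2 * (2 + q)^1 * ((-1)/(2*q))) u := (hs.const_add 2).pow 2
  have hden : HasDerivAt (fun u : ℝ => 1 + Real.sqrt (1-u)) ((-1)/(2*q)) u :=
    hs.const_add 1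
  have hdne : 1 + q ≠ 0 := by positivity
  have := hnum.div hden hdne
  refine this.congr_deriv ?_
  have hqne : q ≠ 0 := ne_of_gt hq0
  field_simp
  ring

lemma lfun_continuousOn : ContinuousOn lfun (Set.Icc 0 1) := by
  have hc : Continuous fun u : ℝ => Real.sqrt (1 - u) :=
    Real.continuous_sqrt.comp (continuous_const.sub continuous_id)
  apply ContinuousOn.div
  · exact ((continuous_const.add hc).pow 2).continuousOn
  · exact (continuous_const.add hc).continuousOn
  · intro x _
    have := Real.sqrt_nonneg (1 - x)
    intro h; linarith [h]

lemma lfun_concave : ConcaveOn ℝ (Set.Icc 0 1) lfun := by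
  apply AntitoneOn.concaveOn_of_deriv (convex_Icc 0 1) lfun_continuousOn
  · rw [interior_Icc]
    intro x hx
    exact (lfun_hasDerivAt hx).differentiableAt.differentiableWithinAt
  · rw [interior_Icc]
    intro u hu v hv huv
    rw [(lfun_hasDerivAt hu).deriv, (lfun_hasDerivAt hv).deriv]
    have hqu : 0 < Real.sqrt (1-u) := Real.sqrt_pos.mpr (by linarith [hu.2])
    have hqv : 0 < Real.sqrt (1-v) := Real.sqrt_pos.mpr (by linarith [hv.2])
    have hle : Real.sqrt (1-v) ≤ Real.sqrt (1-u) :=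
      Real.sqrt_le_sqrt (by linarith)
    set a := Real.sqrt (1-u)
    set b := Real.sqrt (1-v)
    rw [neg_div, neg_div, neg_le_neg_iff, div_le_div_iff₀ (by positivity) (by positivity)]
    nlinarith [mul_nonneg (sub_nonneg.2 hle) (mul_nonneg hqv.le hqu.le),
      mul_nonneg (sub_nonneg.2 hle) hqv.le, sub_nonneg.2 hle]

lemma lfun_anti : AntitoneOn lfun (Set.Icc 0 1) := by
  intro u hu v hv huv
  have hqu : 0 ≤ Real.sqrt (1-u) := Real.sqrt_nonneg _
  have hqv : 0 ≤ Real.sqrt (1-v) := Real.sqrt_nonneg _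
  have hle : Real.sqrt (1-v) ≤ Real.sqrt (1-u) := Real.sqrt_le_sqrt (by linarith)
  unfold lfun
  set a := Real.sqrt (1-u)
  set b := Real.sqrt (1-v)
  rw [div_le_div_iff₀ (by positivity) (by positivity)]
  nlinarith [mul_nonneg (sub_nonneg.2 hle) (mul_nonneg hqv hqu),
    mul_nonneg (sub_nonneg.2 hle) hqv, sub_nonneg.2 hle]



/-- Convex, antitone, positive on `Ioi 0`. -/
def CAP (f : ℝ → ℝ) : Prop :=
  ConvexOn ℝ (Set.Ioi 0) f ∧ AntitoneOn f (Set.Ioi 0) ∧ ∀ x ∈ Set.Ioi (0:ℝ), 0 ≤ f x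

lemma CAP_invShift (c : ℝ) (hc : 0 ≤ c) : CAP (fun x => (x + c)⁻¹) := by
  refine ⟨⟨convex_Ioi 0, ?_⟩, ?_, ?_⟩
  · intro x hx y hy p q hp hq hpq
    simp only [smul_eq_mul] at *
    have hX : 0 < x + c := by have := mem_Ioi.mp hx; linarith
    have hY : 0 < y + c := by have := mem_Ioi.mp hy; linarith
    have hD : p * x + q * y + c = p * (x + c) + q * (y + c) := by
      linear_combination (-c) * hpq
    have hpos : 0 < p * (x + c) + q * (y + c) := by
      rcases lt_or_ge 0 p with hp' | hp'
      · have : 0 ≤ q * (y + c) := mul_nonneg hq hY.le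
        nlinarith
      · have hp0 : p = 0 := le_antisymm hp' hp
        have hq1 : q = 1 := by linarith
        rw [hp0, hq1]; nlinarith
    have hq' : q = 1 - p := by linarith
    subst hq'
    have key : p * (x + c)⁻¹ + (1-p) * (y + c)⁻¹ - (p * (x + c) + (1-p) * (y + c))⁻¹
        = p * (1-p) * (x - y)^2 / ((x + c) * (y + c) * (p * (x + c) + (1-p) * (y + c))) := by
      field_simp
      ring
    have hp1 : 0 ≤ 1 - p := hq
    have hnn : 0 ≤ p * (1-p) * (x - y)^2 / ((x + c) * (y + c) * (p * (x + c) + (1-p) * (y + c))) := by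
      apply div_nonneg
      · positivity
      · positivity
    rw [hD]
    linarith
  · intro x hx y hy hxy
    have hX : 0 < x + c := by have := mem_Ioi.mp hx; linarith
    exact inv_anti₀ hX (by linarith)
  · intro x hx
    have hX : 0 < x + c := by have := mem_Ioi.mp hx; linarith
    positivity

lemma CAP_inv : CAP (fun x : ℝ => x⁻¹) := by
  simpa using CAP_invShift 0 le_rfl

lemma CAP.mul {f g : ℝ → ℝ} (hf : CAP f) (hg : CAP g) : CAP (fun x => f x * g x) := by
  obtain ⟨hf1, hf2, hf3⟩ := hf
  obtain ⟨hg1, hg2, hg3⟩ := hg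
  have hmono : MonovaryOn f g (Set.Ioi 0) := by
    intro i hi j hj hgij
    rcases le_total i j with h | h
    · exact absurd hgij (not_lt.mpr (hg2 hi hj h))
    · exact hf2 hj hi h
  refine ⟨hf1.mul hg1 hf3 hg3 hmono, ?_, ?_⟩
  · intro x hx y hy hxy
    exact mul_le_mul (hf2 hx hy hxy) (hg2 hx hy hxy) (hg3 y hy) (hf3 x hx)
  · intro x hx
    exact mul_nonneg (hf3 x hx) (hg3 x hx)




/-- Concave-antitone composed with convex is concave. -/
lemma comp_concave {D : Set ℝ} {F : ℝ → ℝ} (hD : Convex ℝ D)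
    (hF : ConvexOn ℝ D F) (hmap : ∀ x ∈ D, F x ∈ Set.Icc (0:ℝ) 1) :
    ConcaveOn ℝ D (fun x => lfun (F x)) := by
  refine ⟨hD, fun x hx y hy p q hp hq hpq => ?_⟩
  simp only [smul_eq_mul]
  have hmem : p • x + q • y ∈ D := hD hx hy hp hq hpq
  have h1 : F (p • x + q • y) ≤ p * F x + q * F y := by
    simpa using hF.2 hx hy hp hq hpq
  have hFx := hmap x hx
  have hFy := hmap y hy
  have hcomb : p * F x + q * F y ∈ Set.Icc (0:ℝ) 1 := by
    constructor
    · have := hFx.1; have := hFy.1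
      positivity
    · nlinarith [hFx.2, hFy.2]
  have h2 : lfun (p * F x + q * F y) ≤ lfun (F (p • x + q • y)) :=
    lfun_anti (hmap _ hmem) hcomb h1
  have h3 : p * lfun (F x) + q * lfun (F y) ≤ lfun (p * F x + q * F y) := by
    simpa using lfun_concave.2 hFx hFy hp hq hpq
  simp only [smul_eq_mul] at h1 h2
  linarith

lemma encard_le_two_of {α : Type*} (T : Set α)
    (h : ∀ x ∈ T, ∀ y ∈ T, ∀ z ∈ T, x = y ∨ x = z ∨ y = z) : T.encard ≤ 2 := by
  rcases T.eq_empty_or_nonempty with rfl | ⟨a, ha⟩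
  · simp
  by_cases hb : ∃ b ∈ T, b ≠ a
  · obtain ⟨b, hbT, hba⟩ := hb
    have hsub : T ⊆ {a, b} := by
      intro z hz
      rcases h a ha b hbT z hz with h1 | h1 | h1
      · exact absurd h1.symm hba
      · exact Or.inl h1.symm
      · exact Or.inr h1.symm
    calc T.encard ≤ ({a, b} : Set α).encard := Set.encard_mono hsub
      _ = 2 := Set.encard_pair (Ne.symm hba)
  · push_neg at hb
    have hsub : T ⊆ {a} := fun z hz => hb z hz
    calc T.encard ≤ ({a} : Set α).encard := Set.encard_mono hsub
      _ = 1 := Set.encard_singleton a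
      _ ≤ 2 := by norm_num



noncomputable def Ff (γ E0 e ν : ℝ) : ℝ :=
  12*γ^4 * (ν⁻¹ * (ν⁻¹ * ((ν + (E0+e))⁻¹ *
    ((ν + (4+E0+2*e))⁻¹ * (ν + (4+E0+2*e))⁻¹))))

noncomputable def Gg (γ μ E0 e ν : ℝ) : ℝ :=
  (9/2) * (μ/γ^2) * ((ν + (4+E0+e))^2 * (ν + (E0+e))) / (ν * (ν + (4+E0+2*e)))

def Dset (γ E0 e : ℝ) : Set ℝ := {x ∈ Set.Ioi (0:ℝ) | Ff γ E0 e x ≤ 1}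

lemma Ff_convex (γ E0 e : ℝ) (hE0 : 0 ≤ E0) (he : 0 ≤ e) :
    ConvexOn ℝ (Set.Ioi 0) (Ff γ E0 e) := by
  have base : CAP (fun ν : ℝ => ν⁻¹ * (ν⁻¹ * ((ν + (E0+e))⁻¹ *
      ((ν + (4+E0+2*e))⁻¹ * (ν + (4+E0+2*e))⁻¹)))) :=
    CAP_inv.mul (CAP_inv.mul ((CAP_invShift (E0+e) (by linarith)).mul
      ((CAP_invShift (4+E0+2*e) (by linarith)).mul (CAP_invShift (4+E0+2*e) (by linarith)))))
  have h := ConvexOn.smul (c := 12*γ^4) (by positivity) base.1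
  unfold Ff
  simpa [Ff, smul_eq_mul] using h

lemma Ff_nonneg (γ E0 e : ℝ) (hE0 : 0 ≤ E0) (he : 0 ≤ e) {x : ℝ} (hx : 0 < x) :
    0 ≤ Ff γ E0 e x := by
  have h1 : (0:ℝ) < x + (E0+e) := by linarith
  have h2 : (0:ℝ) < x + (4+E0+2*e) := by linarith
  unfold Ff
  exact mul_nonneg (by positivity) (mul_nonneg (inv_nonneg.2 hx.le)
    (mul_nonneg (inv_nonneg.2 hx.le) (mul_nonneg (inv_nonneg.2 h1.le)
      (mul_nonneg (inv_nonneg.2 h2.le) (inv_nonneg.2 h2.le)))))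

/-- Partial-fraction slope identity for `Gg`. -/
lemma gslope (γ μ E0 e x y : ℝ) (hx : x ≠ 0) (hy : y ≠ 0)
    (hxk : x + (4+E0+2*e) ≠ 0) (hyk : y + (4+E0+2*e) ≠ 0)
    (hk : (4:ℝ)+E0+2*e ≠ 0) (hγ : γ ≠ 0) (hxy : y - x ≠ 0) :
    (Gg γ μ E0 e y - Gg γ μ E0 e x) / (y - x)
    = (9/2) * (μ/γ^2) *
      (1 - ((4+E0+e)^2 * (E0+e)) / ((4+E0+2*e) * (x*y))
         - (e^2*(4+e)) / ((4+E0+2*e) * ((x + (4+E0+2*e)) * (y + (4+E0+2*e))))) := by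
  unfold Gg
  field_simp
  ring

lemma key3 (γ μ E0 e x y z : ℝ) (hγ : 0 < γ) (hμ : 0 < μ) (hE0 : 0 < E0) (he : 0 < e)
    (hx : x ∈ Dset γ E0 e) (hy : y ∈ Dset γ E0 e) (hz : z ∈ Dset γ E0 e)
    (hxy : x < y) (hyz : y < z)
    (ex : lfun (Ff γ E0 e x) = Gg γ μ E0 e x)
    (ey : lfun (Ff γ E0 e y) = Gg γ μ E0 e y)
    (ez : lfun (Ff γ E0 e z) = Gg γ μ E0 e z) : False := by
  have hsub : Dset γ E0 e ⊆ Set.Ioi 0 := fun t ht => ht.1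
  have hFc := Ff_convex γ E0 e hE0.le he.le
  have hDconv : Convex ℝ (Dset γ E0 e) := hFc.convex_le 1
  have hmap : ∀ t ∈ Dset γ E0 e, Ff γ E0 e t ∈ Set.Icc (0:ℝ) 1 := fun t ht =>
    ⟨Ff_nonneg γ E0 e hE0.le he.le (mem_Ioi.mp ht.1), ht.2⟩
  have hconc : ConcaveOn ℝ (Dset γ E0 e) (fun t => lfun (Ff γ E0 e t)) :=
    comp_concave hDconv (hFc.subset hsub hDconv) hmap
  have hsl := hconc.slope_anti_adjacent hx hz hxy hyz
  simp only [ex, ey, ez] at hsl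
  have hx0 : 0 < x := mem_Ioi.mp hx.1
  have hy0 : 0 < y := hx0.trans hxy
  have hz0 : 0 < z := hy0.trans hyz
  have hk : (0:ℝ) < 4+E0+2*e := by linarith
  have hxk : (0:ℝ) < x + (4+E0+2*e) := by linarith
  have hyk : (0:ℝ) < y + (4+E0+2*e) := by linarith
  have hzk : (0:ℝ) < z + (4+E0+2*e) := by linarith
  rw [gslope γ μ E0 e x y hx0.ne' hy0.ne' hxk.ne' hyk.ne' hk.ne' hγ.ne'
      (by linarith : y - x ≠ 0),
    gslope γ μ E0 e y z hy0.ne' hz0.ne' hyk.ne' hzk.ne' hk.ne' hγ.ne'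
      (by linarith : z - y ≠ 0)] at hsl
  set A := (4+E0+e)^2 * (E0+e) with hAdef
  set B := e^2*(4+e) with hBdef
  have hA : (0:ℝ) < A := by rw [hAdef]; positivity
  have hB : (0:ℝ) < B := by rw [hBdef]; positivity
  have h1 : A / ((4+E0+2*e) * (y*z)) < A / ((4+E0+2*e) * (x*y)) := by
    apply div_lt_div_of_pos_left hA (by positivity)
    have : x * y < y * z := by nlinarith
    nlinarith
  have h2 : B / ((4+E0+2*e) * ((y + (4+E0+2*e)) * (z + (4+E0+2*e))))
      < B / ((4+E0+2*e) * ((x + (4+E0+2*e)) * (y + (4+E0+2*e)))) := by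
    apply div_lt_div_of_pos_left hB (by positivity)
    have : (x + (4+E0+2*e)) * (y + (4+E0+2*e)) < (y + (4+E0+2*e)) * (z + (4+E0+2*e)) := by
      nlinarith
    nlinarith
  have hC : (0:ℝ) < (9/2) * (μ/γ^2) := by positivity
  have hSlt : (1 - A / ((4+E0+2*e) * (x*y))
       - B / ((4+E0+2*e) * ((x + (4+E0+2*e)) * (y + (4+E0+2*e)))))
    < (1 - A / ((4+E0+2*e) * (y*z))
       - B / ((4+E0+2*e) * ((y + (4+E0+2*e)) * (z + (4+E0+2*e))))) := by linarith
  have hmul := mul_lt_mul_of_pos_left hSlt hC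
  linarith




/-- the transition system (A)-(B) has at most two solutions `(q, ν)`
with `ν > 0` and `0 ≤ q < 1`. -/
theorem at_most_two_solutions_nonneg_q
    (E0 γ μ : ℝ) (hE0 : 0 < E0) (hγ : 0 < γ) (hμ : 0 < μ) :
    {p : ℝ × ℝ | 0 < p.2 ∧ 0 ≤ p.1 ∧ p.1 < 1 ∧
      EqA E0 γ p.1 p.2 ∧ EqB E0 γ μ p.1 p.2}.encard ≤ 2 := by
  have heps : 0 < epsPar E0 γ := by
    have hlt : Real.sqrt ((E0+4)^2) < Real.sqrt ((E0 + 4)^2 + 4 * γ^2) :=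
      Real.sqrt_lt_sqrt (by positivity) (by nlinarith)
    rw [Real.sqrt_sq (by linarith)] at hlt
    unfold epsPar; linarith
  set e := epsPar E0 γ with hedef
  set T : Set ℝ := {ν ∈ Dset γ E0 e | lfun (Ff γ E0 e ν) = Gg γ μ E0 e ν} with hTdef
  have hE1 : E1Par E0 γ = E0 + e := rfl
  have haP : aPar E0 γ = 4 + E0 + e := rfl
  -- each solution gives a point of T, and q is determined by ν
  have hmain : ∀ q ν : ℝ, 0 < ν → 0 ≤ q → q < 1 → EqA E0 γ q ν → EqB E0 γ μ q ν →
      ν ∈ T ∧ Ff γ E0 e ν = (1 - q) * (1 + q) := by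
    intro q ν hν hq0 hq1 hA hB
    unfold EqA at hA; unfold EqB at hB
    rw [hE1, haP, ← hedef] at hA hB
    have hνE1 : (0:ℝ) < ν + (E0 + e) := by linarith
    have hνk : (0:ℝ) < ν + (4+E0+2*e) := by linarith
    have hνa : (0:ℝ) < ν + (4+E0+e) := by linarith
    have hFA : Ff γ E0 e ν = (1 - q) * (1 + q) := by
      rw [hA]; unfold Ff
      have hd : (0:ℝ) < ν^2 * (ν + (E0+e)) * (ν + (4+E0+e) + e)^2 :=
        mul_pos (mul_pos (pow_pos hν 2) hνE1) (pow_pos (by linarith) 2)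
      rw [eq_div_iff hd.ne']
      field_simp
      ring
    have hF1 : Ff γ E0 e ν ≤ 1 := by rw [hFA]; nlinarith
    have hDmem : ν ∈ Dset γ E0 e := ⟨mem_Ioi.mpr hν, hF1⟩
    have hsq : Real.sqrt (1 - Ff γ E0 e ν) = q := by
      rw [hFA, show 1 - (1-q)*(1+q) = q^2 by ring]
      exact Real.sqrt_sq hq0
    have hlf : lfun (Ff γ E0 e ν) = (2+q)^2/(1+q) := by
      unfold lfun; rw [hsq]
    have hGeq : lfun (Ff γ E0 e ν) = Gg γ μ E0 e ν := by
      rw [hlf, hB]; unfold Gg; ring_nf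
    exact ⟨⟨hDmem, hGeq⟩, hFA⟩
  -- injectivity of snd on the solution set
  apply le_trans (Set.encard_le_encard_of_injOn (f := Prod.snd) (t := T) ?_ ?_) ?_
  · -- MapsTo
    rintro ⟨q, ν⟩ ⟨hν, hq0, hq1, hA, hB⟩
    exact (hmain q ν hν hq0 hq1 hA hB).1
  · -- InjOn
    rintro ⟨q1, ν1⟩ ⟨hν1, hq01, hq11, hA1, hB1⟩ ⟨q2, ν2⟩ ⟨hν2, hq02, hq12, hA2, hB2⟩ hsnd
    simp only at hsnd
    subst hsnd
    have h1 := (hmain q1 ν1 hν1 hq01 hq11 hA1 hB1).2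
    have h2 := (hmain q2 ν1 hν2 hq02 hq12 hA2 hB2).2
    have hqq : q1 = q2 := by
      have hsq : q1^2 = q2^2 := by nlinarith [h1.symm.trans h2]
      calc q1 = Real.sqrt (q1^2) := (Real.sqrt_sq hq01).symm
        _ = Real.sqrt (q2^2) := by rw [hsq]
        _ = q2 := Real.sqrt_sq hq02
    simp [hqq]
  · -- T has at most two elements
    apply encard_le_two_of
    intro x hx y hy z hz
    by_contra hcon
    push_neg at hcon
    obtain ⟨hxy, hxz, hyz⟩ := hcon
    have key : ∀ u v w : ℝ, u ∈ T → v ∈ T → w ∈ T → u < v → v < w → False :=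
      fun u v w hu hv hw h1 h2 =>
        key3 γ μ E0 e u v w hγ hμ hE0 heps hu.1 hv.1 hw.1 h1 h2 hu.2 hv.2 hw.2
    rcases lt_trichotomy x y with h1 | h1 | h1
    · rcases lt_trichotomy y z with h2 | h2 | h2
      · exact key x y z hx hy hz h1 h2
      · exact hyz h2
      · rcases lt_trichotomy x z with h3 | h3 | h3
        · exact key x z y hx hz hy h3 h2
        · exact hxz h3
        · exact key z x y hz hx hy h3 h1
    · exact hxy h1
    · rcases lt_trichotomy x z with h2 | h2 | h2
      · exact key y x z hy hx hz h1 h2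
      · exact hxz h2
      · rcases lt_trichotomy y z with h3 | h3 | h3
        · exact key y z x hy hz hx h3 h2
        · exact hyz h3
        · exact key z y x hz hy hx h3 h1
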